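/- Let Γ > 0, r > 0, and let x : [0,∞) → ℝⁿ be a bounded solution with V ∘ x continuously differentiable such that the function g(t) := Γ·(V(x(t)) - r)⁺ is uniformly continuous, its antiderivative is bounded above, and g ≥ 0. Then limsup_{t→∞} V(x(t)) ≤ r. -/

import Mathlib

/-- Quantitative mean value bound: if `G` has derivative `g` on `[a,b]` and
`g ≥ m` there, then `m * (b - a) ≤ G b - G a`. -/
lemma deriv_lower_bound (G g : ℝ → ℝ) (m a b : ℝ) (hab : a ≤ b)
    (hd : ∀ t ∈ Set.Icc a b, HasDerivAt G (g t) t)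
    (hm : ∀ t ∈ Set.Icc a b, m ≤ g t) :
    m * (b - a) ≤ G b - G a := by
  set H : ℝ → ℝ := fun t => G t - m * t with hH
  have hdH : ∀ t ∈ Set.Icc a b, HasDerivAt H (g t - m) t := by
    intro t ht
    have : HasDerivAt (fun s => m * s) (m * 1) t := (hasDerivAt_id t).const_mul m
    rw [mul_one] at this
    exact (hd t ht).sub this
  have hmono : MonotoneOn H (Set.Icc a b) := by
    apply monotoneOn_of_deriv_nonneg (convex_Icc a b)
    · exact fun t ht => (hdH t ht).continuousAt.continuousWithinAt
    · intro t ht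
      rw [interior_Icc] at ht
      exact (hdH t (Set.Ioo_subset_Icc_self ht)).differentiableAt.differentiableWithinAt
    · intro t ht
      rw [interior_Icc] at ht
      rw [(hdH t (Set.Ioo_subset_Icc_self ht)).deriv]
      exact sub_nonneg.2 (hm t (Set.Ioo_subset_Icc_self ht))
  have := hmono (Set.left_mem_Icc.2 hab) (Set.right_mem_Icc.2 hab) hab
  simp only [hH] at this
  nlinarith

/-- The deadzone mechanism of the DADS controller (inequality (2.14)):
if `g(t) = Γ·(V(x(t)) - r)⁺` is uniformly continuous, nonnegative, and has a
bounded antiderivative, then `limsup_{t→∞} V(x(t)) ≤ r`. -/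
theorem stmt_8 (n : ℕ) (Γ r : ℝ) (hΓ : 0 < Γ) (hr : 0 < r)
    (V : (Fin n → ℝ) → ℝ) (hVcont : Continuous V) (hVnonneg : ∀ x, 0 ≤ V x)
    (x : ℝ → (Fin n → ℝ)) (hxbdd : ∃ M : ℝ, ∀ t, 0 ≤ t → ‖x t‖ ≤ M)
    (hC1 : ContDiffOn ℝ 1 (fun t => V (x t)) (Set.Ici (0 : ℝ)))
    (g : ℝ → ℝ) (hg : ∀ t, g t = Γ * max (V (x t) - r) 0)
    (huc : UniformContinuousOn g (Set.Ici (0 : ℝ)))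
    (G : ℝ → ℝ) (hG : ∀ t, 0 ≤ t → HasDerivAt G (g t) t)
    (hGbdd : ∃ M : ℝ, ∀ t, 0 ≤ t → G t ≤ M)
    (hgnonneg : ∀ t, 0 ≤ g t) :
    Filter.limsup (fun t => V (x t)) Filter.atTop ≤ r := by
  obtain ⟨M, hM⟩ := hGbdd
  -- Main claim: for every ε > 0, eventually V (x t) ≤ r + ε
  have key : ∀ ε : ℝ, 0 < ε → ∀ᶠ t in Filter.atTop, V (x t) ≤ r + ε := by
    intro ε hε
    by_contra hcon
    rw [Filter.not_eventually] at hcon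
    -- frequently V (x t) > r + ε, hence g t ≥ Γ * ε at arbitrarily large times
    have hfreq : ∀ T : ℝ, ∃ t, T ≤ t ∧ 0 ≤ t ∧ Γ * ε ≤ g t := by
      intro T
      obtain ⟨t, ht, hVt⟩ := (Filter.frequently_atTop.1 hcon) (max T 0)
      push_neg at hVt
      refine ⟨t, le_trans (le_max_left _ _) ht, le_trans (le_max_right _ _) ht, ?_⟩
      rw [hg t]
      have h1 : ε ≤ max (V (x t) - r) 0 := by
        have : ε ≤ V (x t) - r := by linarith
        exact le_max_of_le_left this
      exact mul_le_mul_of_nonneg_left h1 hΓ.le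
    set c : ℝ := Γ * ε with hc
    have hcpos : 0 < c := mul_pos hΓ hε
    -- uniform continuity gives δ
    obtain ⟨δ, hδpos, hδ⟩ := (Metric.uniformContinuousOn_iff).1 huc (c / 2) (by linarith)
    -- construct an increasing sequence of times
    choose f hfle hf0 hfg using hfreq
    let u : ℕ → ℝ := fun k => Nat.rec (f 0) (fun _ t => f (t + δ / 2)) k
    have hu0 : u 0 = f 0 := rfl
    have husucc : ∀ k, u (k + 1) = f (u k + δ / 2) := fun k => rfl
    have hupos : ∀ k, 0 ≤ u k := by
      intro k
      cases k with
      | zero => exact hf0 0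
      | succ m => exact hf0 _
    have hustep : ∀ k, u k + δ / 2 ≤ u (k + 1) := by
      intro k; rw [husucc]; exact hfle _
    have hug : ∀ k, c ≤ g (u k) := by
      intro k
      cases k with
      | zero => exact hfg 0
      | succ m => exact hfg _
    -- On [u k, u k + δ/2], g ≥ c/2
    have hgbig : ∀ k, ∀ s ∈ Set.Icc (u k) (u k + δ / 2), c / 2 ≤ g s := by
      intro k s hs
      have hs0 : (0:ℝ) ≤ s := le_trans (hupos k) hs.1
      have hdist : dist s (u k) < δ := by
        rw [Real.dist_eq, abs_of_nonneg (by linarith [hs.1])]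
        have := hs.2
        linarith
      have := hδ s hs0 (u k) (hupos k) hdist
      rw [Real.dist_eq] at this
      have h2 := abs_lt.1 this
      have := hug k
      linarith [h2.1, h2.2]
    -- G increases by at least c*δ/4 over each step
    have hstep : ∀ k, G (u k) + c / 2 * (δ / 2) ≤ G (u (k + 1)) := by
      intro k
      have h1 : c / 2 * (u k + δ / 2 - u k) ≤ G (u k + δ / 2) - G (u k) := by
        apply deriv_lower_bound G g (c / 2) _ _ (by linarith)
        · intro t ht
          exact hG t (le_trans (hupos k) ht.1)
        · exact hgbig k
      have h2 : (0:ℝ) * (u (k + 1) - (u k + δ / 2)) ≤ G (u (k + 1)) - G (u k + δ / 2) := by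
        apply deriv_lower_bound G g 0 _ _ (hustep k)
        · intro t ht
          exact hG t (le_trans (by linarith [hupos k]) ht.1)
        · intro t _; exact hgnonneg t
      have h3 : u k + δ / 2 - u k = δ / 2 := by ring
      rw [h3] at h1
      rw [zero_mul] at h2
      linarith
    -- By induction, G (u k) ≥ G (u 0) + k * (c/2 * (δ/2))
    have hind : ∀ k : ℕ, G (u 0) + k * (c / 2 * (δ / 2)) ≤ G (u k) := by
      intro k
      induction k with
      | zero => simp
      | succ m ih =>
        have := hstep m
        push_cast
        push_cast at ih
        linarith
    -- contradiction with boundedness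
    have hq : 0 < c / 2 * (δ / 2) := by positivity
    obtain ⟨k, hk⟩ := exists_nat_gt ((M - G (u 0)) / (c / 2 * (δ / 2)))
    have := hind k
    have hMk := hM (u k) (hupos k)
    have : (k : ℝ) * (c / 2 * (δ / 2)) ≤ M - G (u 0) := by linarith
    have : (k : ℝ) ≤ (M - G (u 0)) / (c / 2 * (δ / 2)) := (le_div_iff₀ hq).2 this
    linarith
  -- conclude limsup ≤ r
  have hbd : Filter.IsCoboundedUnder (· ≤ ·) Filter.atTop (fun t => V (x t)) :=
    Filter.isCoboundedUnder_le_of_le Filter.atTop (fun t => hVnonneg (x t))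
  refine le_of_forall_pos_le_add ?_
  intro ε hε
  exact Filter.limsup_le_of_le hbd (key ε hε)
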